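/- For every natural number i > 0, ∫_0^{2/(3^i-1)} f(t) dt = (2^(i-1) / 9^i) · ((5·3^i - 1) / (2·3^i - 2)) · (1 / (1 - (2/9)^i)). -/

import Mathlib

open intervalIntegral Set

theorem bourbaki_stmt (f : ℝ → ℝ)
    (hcont : ContinuousOn f (Set.Icc 0 1))
    (h0 : f 0 = 0) (h1 : f 1 = 1)
    (hw1 : ∀ x ∈ Set.Icc (0:ℝ) 1, f (x / 3) = (2/3) * f x)
    (hw2 : ∀ x ∈ Set.Icc (0:ℝ) 1, f ((2 - x) / 3) = (1/3) * (1 + f x))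
    (hw3 : ∀ x ∈ Set.Icc (0:ℝ) 1, f ((2 + x) / 3) = 1/3 + (2/3) * f x) :
    ∀ i : ℕ, 0 < i → ∫ t in (0:ℝ)..(2 / (3 ^ i - 1)), f t = (2 ^ (i - 1) / 9 ^ i) * ((5 * 3 ^ i - 1) / (2 * 3 ^ i - 2)) * (1 / (1 - (2/9) ^ i)) := by
  have hint : ∀ a b : ℝ, a ∈ Icc (0:ℝ) 1 → b ∈ Icc (0:ℝ) 1 →
      IntervalIntegrable f MeasureTheory.volume a b := fun a b ha hb =>
    (hcont.mono (uIcc_subset_Icc ha hb)).intervalIntegrable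
  have h01 : (0:ℝ) ∈ Icc (0:ℝ) 1 := by norm_num
  have h11 : (1:ℝ) ∈ Icc (0:ℝ) 1 := by norm_num
  -- Lemma A : F(b/3) = (2/9) F(b)
  have lemA : ∀ b ∈ Icc (0:ℝ) 1, (∫ t in (0:ℝ)..(b/3), f t) = (2/9) * ∫ t in (0:ℝ)..b, f t := by
    intro b hb
    have e1 : (∫ x in (0:ℝ)..b, f (x/3)) = (3:ℝ) • ∫ t in ((0:ℝ)/3)..(b/3), f t :=
      integral_comp_div f (by norm_num)
    have e2 : (∫ x in (0:ℝ)..b, f (x/3)) = ∫ x in (0:ℝ)..b, (2/3) * f x :=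
      integral_congr fun x hx => hw1 x (uIcc_subset_Icc h01 hb hx)
    rw [integral_const_mul] at e2
    rw [e2, zero_div, smul_eq_mul] at e1
    linarith
  -- value of the full integral
  have e1 : (∫ t in (0:ℝ)..(1/3:ℝ), f t) = (2/9) * ∫ t in (0:ℝ)..1, f t := lemA 1 h11
  have e2 : (∫ t in (1/3:ℝ)..(2/3:ℝ), f t) = (1/9) * (1 + ∫ t in (0:ℝ)..1, f t) := by
    have s1 : (∫ x in (0:ℝ)..1, f ((2 - x)/3)) = ∫ y in (2-(1:ℝ))..(2-(0:ℝ)), f (y/3) :=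
      integral_comp_sub_left (fun y => f (y/3)) 2
    have s2 : (∫ y in (1:ℝ)..2, f (y/3)) = (3:ℝ) • ∫ t in ((1:ℝ)/3)..((2:ℝ)/3), f t :=
      integral_comp_div f (by norm_num)
    have s3 : (∫ x in (0:ℝ)..1, f ((2 - x)/3)) = ∫ x in (0:ℝ)..1, (1/3) * (1 + f x) :=
      integral_congr fun x hx => hw2 x (uIcc_subset_Icc h01 h11 hx)
    have s4 : (∫ x in (0:ℝ)..1, (1/3) * (1 + f x)) = (1/3) * ((1:ℝ) + ∫ t in (0:ℝ)..1, f t) := by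
      rw [integral_const_mul]
      congr 1
      rw [integral_add intervalIntegrable_const (hint 0 1 h01 h11)]
      simp
    norm_num at s1 s2 s3 s4 ⊢
    rw [s3, s4] at s1
    linarith
  have e3 : (∫ t in (2/3:ℝ)..1, f t) = 1/9 + (2/9) * ∫ t in (0:ℝ)..1, f t := by
    have s1 : (∫ x in (0:ℝ)..1, f ((2 + x)/3)) = ∫ y in (2+(0:ℝ))..(2+(1:ℝ)), f (y/3) :=
      integral_comp_add_left (fun y => f (y/3)) 2
    have s2 : (∫ y in (2:ℝ)..3, f (y/3)) = (3:ℝ) • ∫ t in ((2:ℝ)/3)..((3:ℝ)/3), f t :=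
      integral_comp_div f (by norm_num)
    have s3 : (∫ x in (0:ℝ)..1, f ((2 + x)/3)) = ∫ x in (0:ℝ)..1, (1/3 + (2/3) * f x) :=
      integral_congr fun x hx => hw3 x (uIcc_subset_Icc h01 h11 hx)
    have s4 : (∫ x in (0:ℝ)..1, (1/3 + (2/3) * f x)) = 1/3 + (2/3) * ∫ t in (0:ℝ)..1, f t := by
      rw [integral_add intervalIntegrable_const ((hint 0 1 h01 h11).const_mul _),
        integral_const_mul]
      simp
    norm_num at s1 s2 s3 s4 ⊢
    rw [s3, s4] at s1
    linarith
  have hIval : (∫ t in (0:ℝ)..1, f t) = 1/2 := by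
    have hsplit1 : (∫ t in (0:ℝ)..(1/3:ℝ), f t) + (∫ t in (1/3:ℝ)..(2/3:ℝ), f t)
        = ∫ t in (0:ℝ)..(2/3:ℝ), f t :=
      integral_add_adjacent_intervals (hint 0 (1/3) h01 (by norm_num))
        (hint (1/3) (2/3) (by norm_num) (by norm_num))
    have hsplit2 : (∫ t in (0:ℝ)..(2/3:ℝ), f t) + (∫ t in (2/3:ℝ)..1, f t)
        = ∫ t in (0:ℝ)..1, f t :=
      integral_add_adjacent_intervals (hint 0 (2/3) h01 (by norm_num))
        (hint (2/3) 1 (by norm_num) h11)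
    linarith
  have hF23 : (∫ t in (0:ℝ)..(2/3:ℝ), f t) = 5/18 := by
    have hsplit1 : (∫ t in (0:ℝ)..(1/3:ℝ), f t) + (∫ t in (1/3:ℝ)..(2/3:ℝ), f t)
        = ∫ t in (0:ℝ)..(2/3:ℝ), f t :=
      integral_add_adjacent_intervals (hint 0 (1/3) h01 (by norm_num))
        (hint (1/3) (2/3) (by norm_num) (by norm_num))
    rw [hIval] at e1 e2
    linarith
  -- Lemma B : F((2+b)/3) = 5/18 + b/9 + (2/9) F(b)
  have lemB : ∀ b ∈ Icc (0:ℝ) 1, (∫ t in (0:ℝ)..((2+b)/3), f t)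
      = 5/18 + b/9 + (2/9) * ∫ t in (0:ℝ)..b, f t := by
    intro b hb
    have hb23 : (2+b)/3 ∈ Icc (0:ℝ) 1 := by
      constructor
      · nlinarith [hb.1, hb.2]
      · nlinarith [hb.1, hb.2]
    have s1 : (∫ x in (0:ℝ)..b, f ((2 + x)/3)) = ∫ y in (2+(0:ℝ))..(2+b), f (y/3) :=
      integral_comp_add_left (fun y => f (y/3)) 2
    have s2 : (∫ y in (2:ℝ)..(2+b), f (y/3)) = (3:ℝ) • ∫ t in ((2:ℝ)/3)..((2+b)/3), f t :=
      integral_comp_div f (by norm_num)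
    have s3 : (∫ x in (0:ℝ)..b, f ((2 + x)/3)) = ∫ x in (0:ℝ)..b, (1/3 + (2/3) * f x) :=
      integral_congr fun x hx => hw3 x (uIcc_subset_Icc h01 hb hx)
    have s4 : (∫ x in (0:ℝ)..b, (1/3 + (2/3) * f x)) = b/3 + (2/3) * ∫ t in (0:ℝ)..b, f t := by
      rw [integral_add intervalIntegrable_const ((hint 0 b h01 hb).const_mul _),
        integral_const_mul]
      simp
      ring
    have hsplit : (∫ t in (0:ℝ)..(2/3:ℝ), f t) + (∫ t in (2/3:ℝ)..((2+b)/3), f t)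
        = ∫ t in (0:ℝ)..((2+b)/3), f t :=
      integral_add_adjacent_intervals (hint 0 (2/3) h01 (by norm_num))
        (hint (2/3) ((2+b)/3) (by norm_num) hb23)
    norm_num at s1 s2 s3 s4 ⊢
    rw [s3, s4] at s1
    rw [← hsplit, hF23]
    linarith
  -- iterated Lemma A
  have lemIter : ∀ (j : ℕ), ∀ b ∈ Icc (0:ℝ) 1,
      (∫ t in (0:ℝ)..(b/3^j), f t) = (2/9)^j * ∫ t in (0:ℝ)..b, f t := by
    intro j
    induction j with
    | zero => intro b _; simp
    | succ j ih =>
      intro b hb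
      have hb3 : b/3 ∈ Icc (0:ℝ) 1 := by
        constructor
        · linarith [hb.1]
        · linarith [hb.2]
      have hrw : b / 3^(j+1) = (b/3)/3^j := by
        rw [pow_succ]; ring
      rw [hrw, ih (b/3) hb3, lemA b hb, pow_succ]
      ring
  -- main argument
  intro i hi
  obtain ⟨n, rfl⟩ : ∃ n, i = n + 1 := ⟨i - 1, (Nat.succ_pred_eq_of_pos hi).symm⟩
  set c : ℝ := 2 / (3 ^ (n+1) - 1) with hc
  have h3n : (3:ℝ) ≤ 3 ^ (n+1) := by
    calc (3:ℝ) = 3^1 := (pow_one 3).symm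
    _ ≤ 3^(n+1) := pow_le_pow_right₀ (by norm_num) (Nat.le_add_left 1 n)
  have hden : (3:ℝ)^(n+1) - 1 ≠ 0 := by linarith
  have hcmem : c ∈ Icc (0:ℝ) 1 := by
    constructor
    · apply div_nonneg (by norm_num); linarith
    · rw [div_le_one (by linarith)]; linarith
  have hc2mem : (2 + c)/3 ∈ Icc (0:ℝ) 1 := by
    constructor
    · nlinarith [hcmem.1, hcmem.2]
    · nlinarith [hcmem.1, hcmem.2]
  have hfix : c = ((2 + c)/3) / 3^n := by
    field_simp [hc]
    rw [hc]
    field_simp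
    ring
  have key : (∫ t in (0:ℝ)..c, f t)
      = (2/9)^n * (5/18 + c/9 + (2/9) * ∫ t in (0:ℝ)..c, f t) := by
    conv_lhs => rw [hfix]
    rw [lemIter n ((2+c)/3) hc2mem, lemB c hcmem]
  have hlt1 : ((2:ℝ)/9)^(n+1) < 1 := pow_lt_one₀ (by norm_num) (by norm_num) (by norm_num)
  have hne : (1:ℝ) - (2/9)^(n+1) ≠ 0 := by linarith
  have key2 : (∫ t in (0:ℝ)..c, f t) * (1 - (2/9)^(n+1))
      = (2/9)^n * (5/18 + c/9) := by
    rw [pow_succ]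
    linear_combination key
  have hrhs : ((2:ℝ) ^ (n+1-1) / 9 ^ (n+1)) * ((5 * 3 ^ (n+1) - 1) / (2 * 3 ^ (n+1) - 2))
      * (1 / (1 - (2/9) ^ (n+1))) * (1 - (2/9)^(n+1)) = (2/9)^n * (5/18 + c/9) := by
    have hn1 : n + 1 - 1 = n := rfl
    have hden2 : (2:ℝ) * 3^(n+1) - 2 ≠ 0 := by linarith
    have h9n : (9:ℝ)^n ≠ 0 := by positivity
    rw [hn1]
    calc ((2:ℝ) ^ n / 9 ^ (n+1)) * ((5 * 3 ^ (n+1) - 1) / (2 * 3 ^ (n+1) - 2))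
        * (1 / (1 - (2/9) ^ (n+1))) * (1 - (2/9)^(n+1))
        = ((2:ℝ) ^ n / 9 ^ (n+1)) * ((5 * 3 ^ (n+1) - 1) / (2 * 3 ^ (n+1) - 2))
          * ((1 / (1 - (2/9) ^ (n+1))) * (1 - (2/9)^(n+1))) := by ring
      _ = ((2:ℝ) ^ n / 9 ^ (n+1)) * ((5 * 3 ^ (n+1) - 1) / (2 * 3 ^ (n+1) - 2)) := by
          rw [one_div_mul_cancel hne, mul_one]
      _ = (2/9)^n * (5/18 + c/9) := by
          rw [hc, div_pow, pow_succ (9:ℝ) n]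
          field_simp
          ring
  apply mul_right_cancel₀ hne
  rw [key2, hrhs]
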